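/- Let S be a 0-left-cancellative semigroup with zero admitting least common multiples. For a finite subset Λ ⊆ t̃S with Λ ∩ S ≠ ∅ and elements u, v ∈ Λ, let θ_u f_Λ θ_v⁻¹ denote the partial bijection of S' with domain θ_v(F_Λ) and range θ_u(F_Λ) sending v·x ↦ u·x for x ∈ F_Λ (with the convention 1·x = x). Then the collection H = {θ_u f_Λ θ_v⁻¹ : Λ ⊆ t̃S finite, Λ ∩ S ≠ ∅, u, v ∈ Λ} is exactly the inverse hull of S, i.e. the smallest collection of partial bijections of S' that contains θ_s for every s ∈ S and is closed under composition (of partial maps) and under taking inverses. -/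

import Mathlib

namespace ExSt

variable {S : Type*} [SemigroupWithZero S]

/-- `s` divides `t`: `t = s` or `t = s * u` for some `u`. -/
def Divides (s t : S) : Prop := t = s ∨ ∃ u : S, t = s * u

/-- `r` is a least common multiple of `s` and `t`. -/
def IsLCM (s t r : S) : Prop :=
  (Set.range (s * ·) ∩ Set.range (t * ·) = Set.range (r * ·)) ∧ Divides s r ∧ Divides t r

/-- `S` is 0-left-cancellative. -/
def LeftCancel0 (S : Type*) [SemigroupWithZero S] : Prop :=
  ∀ s t r : S, s * t = s * r → s * t ≠ 0 → t = r

/-- `S` admits least common multiples. -/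
def AdmitsLCM (S : Type*) [SemigroupWithZero S] : Prop :=
  ∀ s t : S, ∃ r : S, IsLCM s t r

/-- A string in `S`. -/
def IsString (σ : Set S) : Prop :=
  σ.Nonempty ∧ (0 : S) ∉ σ ∧ (∀ s t : S, Divides s t → t ∈ σ → s ∈ σ) ∧
    ∀ s₁ ∈ σ, ∀ s₂ ∈ σ, ∃ s ∈ σ, Divides s₁ s ∧ Divides s₂ s

/-- `F_s = {x | s * x ≠ 0}`. -/
def Fset (s : S) : Set S := {x | s * x ≠ 0}

/-- `E_s = sS \ {0}`. -/
def Eset (s : S) : Set S := {y | ∃ x : S, y = s * x ∧ s * x ≠ 0}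

/-- `F_w` for `w` in the unitization `t̃S = S ∪ {1}` (modelled as `Option S`, `none = 1`). -/
def FsetW : Option S → Set S
  | none => {x | x ≠ 0}
  | some s => Fset s

/-- `E_w` for `w` in the unitization, with `E_1 = S'`. -/
def EsetW : Option S → Set S
  | none => {x | x ≠ 0}
  | some s => Eset s

/-- `F_Λ = ⋂_{w ∈ Λ} F_w`. -/
def FsetLam (Λ : Finset (Option S)) : Set S := ⋂ w ∈ Λ, FsetW w

/-- Left multiplication by `u ∈ t̃S` (with `1 · x = x`). -/
def thetaApp : Option S → S → S
  | none, x => x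
  | some u, x => u * x

/-- `θ_u(X)` for `u ∈ t̃S`. -/
def thetaImg (u : Option S) (X : Set S) : Set S := thetaApp u '' X

/-- The family `𝔈(S)` of constructible sets. -/
def Econs (S : Type*) [SemigroupWithZero S] : Set (Set S) :=
  {X | ∃ Λ : Finset (Option S), (∃ s : S, some s ∈ Λ) ∧ ∃ u ∈ Λ, X = thetaImg u (FsetLam Λ)}

/-- `r*σ = {t | t ∥ r·s for some s ∈ σ}`. -/
def rstar (r : S) (σ : Set S) : Set S := {t | ∃ s ∈ σ, Divides t (r * s)}

/-- `r⁻¹*σ = {t | r·t ∈ σ}`. -/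
def rinvstar (r : S) (σ : Set S) : Set S := {t | r * t ∈ σ}

/-- `F*_r`: strings `σ` with `r·s ≠ 0` for all `s ∈ σ`. -/
def Fstar (r : S) : Set (Set S) := {σ | IsString σ ∧ ∀ s ∈ σ, r * s ≠ 0}

/-- `E*_r`: strings `σ` with `σ ∩ rS ≠ ∅`. -/
def Estar (r : S) : Set (Set S) := {σ | IsString σ ∧ (σ ∩ Set.range (r * ·)).Nonempty}

/-- `F*_w` for `w` in the unitization, with `F*_1` the set of all strings. -/
def FstarW : Option S → Set (Set S)
  | none => {σ | IsString σ}
  | some r => Fstar r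

/-- `F*_Λ = ⋂_{w ∈ Λ} F*_w`. -/
def FstarLam (Λ : Finset (Option S)) : Set (Set S) := ⋂ w ∈ Λ, FstarW w

/-- The action of `u ∈ t̃S` on strings (with `1*σ = σ`). -/
def thetaStarApp : Option S → Set S → Set S
  | none => id
  | some u => rstar u

/-- `θ*_u(Y)` for `u ∈ t̃S`. -/
def thetaStarImg (u : Option S) (Y : Set (Set S)) : Set (Set S) := thetaStarApp u '' Y

/-- A character of the semilattice `E` (values `False`/`True` playing the role of `0`/`1`). -/
def IsCharacter (E : Set (Set S)) (φ : Set S → Prop) : Prop :=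
  ¬ φ ∅ ∧ (∃ X ∈ E, φ X) ∧ ∀ X ∈ E, ∀ Y ∈ E, (φ (X ∩ Y) ↔ φ X ∧ φ Y)

/-- An ultra-character: a character maximal for the pointwise order on `E`. -/
def IsUltraCharacter (E : Set (Set S)) (φ : Set S → Prop) : Prop :=
  IsCharacter E φ ∧
    ∀ ψ : Set S → Prop, IsCharacter E ψ → (∀ X ∈ E, φ X → ψ X) → ∀ X ∈ E, ψ X → φ X

/-- The character `φ_σ` associated with a string `σ`. -/
def phiStr (σ : Set S) (X : Set S) : Prop :=
  ∃ Λ : Finset (Option S), (∃ s : S, some s ∈ Λ) ∧ ∃ u ∈ Λ,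
    X = thetaImg u (FsetLam Λ) ∧ σ ∈ thetaStarImg u (FstarLam Λ)

/-- The set `σ_φ = {s | φ(E_s) = 1}` associated with a character `φ`. -/
def sigmaOf (φ : Set S → Prop) : Set S := {s | φ (Eset s)}

/-- The interior of a string. -/
def strInterior (σ : Set S) : Set S := {s | ∃ x : S, s * x ∈ σ}

/-- The graph of the regular representation map `θ_s : F_s → E_s`, `x ↦ s·x`. -/
def graphTheta (s : S) : Set (S × S) := {p | p.2 = s * p.1 ∧ s * p.1 ≠ 0}

/-- Composition of partial maps, represented by their graphs: first `R₁`, then `R₂`. -/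
def compGraph (R₁ R₂ : Set (S × S)) : Set (S × S) := {p | ∃ y : S, (p.1, y) ∈ R₁ ∧ (y, p.2) ∈ R₂}

/-- Inverse of a partial map, represented by its graph. -/
def invGraph (R : Set (S × S)) : Set (S × S) := {p | (p.2, p.1) ∈ R}

/-- `R` is (the graph of) a partial bijection of `S' = S \ {0}`. -/
def IsPartialBij (R : Set (S × S)) : Prop :=
  (∀ p ∈ R, p.1 ≠ (0 : S) ∧ p.2 ≠ (0 : S)) ∧
    (∀ x y y' : S, (x, y) ∈ R → (x, y') ∈ R → y = y') ∧
    ∀ x x' y : S, (x, y) ∈ R → (x', y) ∈ R → x = x'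

section Aux

lemma mem_fsetW (w : Option S) (x : S) : x ∈ FsetW w ↔ thetaApp w x ≠ 0 := by
  cases w <;> rfl

lemma mem_fsetLam {Λ : Finset (Option S)} {x : S} :
    x ∈ FsetLam Λ ↔ ∀ w ∈ Λ, x ∈ FsetW w := by
  simp [FsetLam]

/-- Multiplication on the unitization. -/
def omul : Option S → Option S → Option S
  | none, e => e
  | some t, none => some t
  | some t, some e => some (t * e)

lemma thetaApp_omul (w e : Option S) (z : S) :
    thetaApp (omul w e) z = thetaApp w (thetaApp e z) := by
  cases w <;> cases e <;> simp [omul, thetaApp, mul_assoc]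

lemma omul_some (t : S) (e : Option S) : ∃ s' : S, omul (some t) e = some s' := by
  cases e with
  | none => exact ⟨t, rfl⟩
  | some x => exact ⟨t * x, rfl⟩

lemma theta_cancel (hlc : LeftCancel0 S) (w : Option S) {x x' : S}
    (h : thetaApp w x = thetaApp w x') (hne : thetaApp w x ≠ 0) : x = x' := by
  cases w with
  | none => exact h
  | some r => exact hlc r x x' h hne

lemma divides_eps {r c : S} (h : Divides r c) :
    ∃ e : Option S, ∀ z : S, c * z = r * thetaApp e z := by
  rcases h with rfl | ⟨e, rfl⟩
  · exact ⟨none, fun z => rfl⟩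
  · exact ⟨some e, fun z => mul_assoc r e z⟩

lemma comp_eps (hlc : LeftCancel0 S) (hlcm : AdmitsLCM S) (a b : Option S) :
    ∃ e₁ e₂ : Option S,
      (∀ z : S, thetaApp a (thetaApp e₁ z) = thetaApp b (thetaApp e₂ z)) ∧
      ∀ x y : S, thetaApp a x ≠ 0 → thetaApp a x = thetaApp b y →
        ∃ z : S, x = thetaApp e₁ z ∧ y = thetaApp e₂ z := by
  match a, b with
  | none, none => exact ⟨none, none, fun z => rfl, fun x y _ h => ⟨x, rfl, h.symm⟩⟩
  | none, some r => exact ⟨some r, none, fun z => rfl, fun x y _ h => ⟨y, h, rfl⟩⟩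
  | some r, none => exact ⟨none, some r, fun z => rfl, fun x y _ h => ⟨x, rfl, h.symm⟩⟩
  | some r₁, some r₂ =>
    obtain ⟨c, hrange, hd₁, hd₂⟩ := hlcm r₁ r₂
    obtain ⟨e₁, he₁⟩ := divides_eps hd₁
    obtain ⟨e₂, he₂⟩ := divides_eps hd₂
    refine ⟨e₁, e₂, fun z => ?_, fun x y hne h => ?_⟩
    · show r₁ * thetaApp e₁ z = r₂ * thetaApp e₂ z
      rw [← he₁, ← he₂]
    · have hmem : r₁ * x ∈ Set.range (c * ·) := by
        rw [← hrange]
        exact ⟨⟨x, rfl⟩, ⟨y, h.symm⟩⟩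
      obtain ⟨z, hz⟩ := hmem
      have hz' : c * z = r₁ * x := hz
      refine ⟨z, ?_, ?_⟩
      · exact hlc r₁ x _ (by rw [← hz', he₁ z]) hne
      · have h' : r₁ * x = r₂ * y := h
        have hne' : r₁ * x ≠ 0 := hne
        refine hlc r₂ y _ ?_ (h' ▸ hne')
        rw [← h', ← hz', he₂ z]

/-- Identity partial map on a set. -/
def idOn (A : Set S) : Set (S × S) := {p | p.1 = p.2 ∧ p.1 ∈ A}

lemma comp_theta_inv (hlc : LeftCancel0 S) (s : S) :
    compGraph (graphTheta s) (invGraph (graphTheta s)) = idOn (Fset s) := by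
  ext ⟨x, x'⟩
  simp only [compGraph, invGraph, graphTheta, idOn, Fset, Set.mem_setOf_eq]
  constructor
  · rintro ⟨y, ⟨h1, h2⟩, h3, h4⟩
    exact ⟨hlc s x x' (h1.symm.trans h3) h2, h2⟩
  · rintro ⟨h1, h2⟩
    subst h1
    exact ⟨s * x, ⟨rfl, h2⟩, rfl, h2⟩

lemma compGraph_idOn (A B : Set S) : compGraph (idOn A) (idOn B) = idOn (A ∩ B) := by
  ext ⟨x, y⟩
  constructor
  · rintro ⟨z, ⟨h1, h2⟩, h3, h4⟩
    exact ⟨h1.trans h3, h2, h1 ▸ h4⟩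
  · rintro ⟨h1, h2, h3⟩
    exact ⟨x, ⟨rfl, h2⟩, h1, h3⟩

lemma fset_ne_zero {s x : S} (h : x ∈ Fset s) : x ≠ 0 := by
  rintro rfl
  exact h (mul_zero s)

end Aux

section Main

variable {C : Set (Set (S × S))}

lemma idOn_fsetLam_mem (hlc : LeftCancel0 S)
    (hgen : ∀ s : S, graphTheta s ∈ C)
    (hcomp : ∀ R₁ ∈ C, ∀ R₂ ∈ C, compGraph R₁ R₂ ∈ C)
    (hinv : ∀ R ∈ C, invGraph R ∈ C)
    (Λ : Finset (Option S)) {s₀ : S} (hs₀ : some s₀ ∈ Λ) :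
    idOn (FsetLam Λ) ∈ C := by
  classical
  have key : ∀ (Λ : Finset (Option S)) (s : S), idOn (Fset s ∩ FsetLam Λ) ∈ C := by
    intro Λ
    induction Λ using Finset.induction_on with
    | empty =>
      intro s
      have hF : FsetLam (∅ : Finset (Option S)) = Set.univ := by simp [FsetLam]
      rw [hF, Set.inter_univ]
      have := hcomp _ (hgen s) _ (hinv _ (hgen s))
      rwa [comp_theta_inv hlc] at this
    | insert w Λ' hw ih =>
      intro s
      cases w with
      | none =>
        have hset : Fset s ∩ FsetLam (insert none Λ') = Fset s ∩ FsetLam Λ' := by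
          ext x
          simp only [FsetLam, Finset.mem_insert, Set.mem_inter_iff, Set.mem_iInter]
          constructor
          · rintro ⟨h1, h2⟩
            exact ⟨h1, fun w hw => h2 w (Or.inr hw)⟩
          · rintro ⟨h1, h2⟩
            refine ⟨h1, fun w hw => ?_⟩
            rcases hw with rfl | hw
            · exact fset_ne_zero h1
            · exact h2 w hw
        rw [hset]; exact ih s
      | some t =>
        have := hcomp _ (ih t) _ (ih s)
        rw [compGraph_idOn] at this
        have hset : (Fset t ∩ FsetLam Λ') ∩ (Fset s ∩ FsetLam Λ')
            = Fset s ∩ FsetLam (insert (some t) Λ') := by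
          ext x
          simp only [FsetLam, Finset.mem_insert, Set.mem_inter_iff, Set.mem_iInter]
          constructor
          · rintro ⟨⟨h1, h2⟩, h3, h4⟩
            refine ⟨h3, fun w hw => ?_⟩
            rcases hw with rfl | hw
            · exact h1
            · exact h2 w hw
          · rintro ⟨h1, h2⟩
            exact ⟨⟨h2 (some t) (Or.inl rfl), fun w hw => h2 w (Or.inr hw)⟩,
              h1, fun w hw => h2 w (Or.inr hw)⟩
        rwa [hset] at this
  have hsub : FsetLam Λ = Fset s₀ ∩ FsetLam Λ := by
    ext x
    simp only [Set.mem_inter_iff, iff_and_self]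
    intro hx
    exact mem_fsetLam.mp hx (some s₀) hs₀
  rw [hsub]
  exact key Λ s₀

lemma tset_mem (hlc : LeftCancel0 S)
    (hgen : ∀ s : S, graphTheta s ∈ C)
    (hcomp : ∀ R₁ ∈ C, ∀ R₂ ∈ C, compGraph R₁ R₂ ∈ C)
    (hinv : ∀ R ∈ C, invGraph R ∈ C)
    (Λ : Finset (Option S)) {s₀ : S} (hs₀ : some s₀ ∈ Λ)
    {w : Option S} (hw : w ∈ Λ) :
    {p : S × S | ∃ x ∈ FsetLam Λ, p = (x, thetaApp w x)} ∈ C := by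
  have hid := idOn_fsetLam_mem hlc hgen hcomp hinv Λ hs₀
  cases w with
  | none =>
    have heq : {p : S × S | ∃ x ∈ FsetLam Λ, p = (x, thetaApp (none : Option S) x)}
        = idOn (FsetLam Λ) := by
      ext ⟨x, y⟩
      simp only [Set.mem_setOf_eq, Prod.mk.injEq, thetaApp, idOn]
      constructor
      · rintro ⟨x', hx', rfl, rfl⟩
        exact ⟨rfl, hx'⟩
      · rintro ⟨rfl, h2⟩
        exact ⟨x, h2, rfl, rfl⟩
    rw [heq]; exact hid
  | some t =>
    have hC := hcomp _ hid _ (hgen t)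
    have heq : compGraph (idOn (FsetLam Λ)) (graphTheta t)
        = {p : S × S | ∃ x ∈ FsetLam Λ, p = (x, thetaApp (some t) x)} := by
      ext ⟨x, y⟩
      simp only [compGraph, idOn, graphTheta, Set.mem_setOf_eq, Prod.mk.injEq, thetaApp]
      constructor
      · rintro ⟨z, ⟨rfl, h2⟩, h3, h4⟩
        exact ⟨x, h2, rfl, h3⟩
      · rintro ⟨x', hx', rfl, rfl⟩
        refine ⟨x, ⟨rfl, hx'⟩, rfl, ?_⟩
        exact (mem_fsetW (some t) x).mp (mem_fsetLam.mp hx' (some t) hw)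
    rwa [heq] at hC

end Main


/-- The collection `H = {θ_u f_Λ θ_v⁻¹}` equals the inverse hull of `S`, i.e. the smallest
collection of partial bijections of `S'` containing every `θ_s` and closed under composition
and inverses. -/
theorem inverse_hull_description (hlc : LeftCancel0 S) (hlcm : AdmitsLCM S) :
    {R : Set (S × S) | ∃ Λ : Finset (Option S), (∃ s : S, some s ∈ Λ) ∧ ∃ u ∈ Λ, ∃ v ∈ Λ,
        R = {p : S × S | ∃ x ∈ FsetLam Λ, p = (thetaApp v x, thetaApp u x)}} =
    ⋂₀ {C : Set (Set (S × S)) |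
        (∀ R ∈ C, IsPartialBij R) ∧ (∀ s : S, graphTheta s ∈ C) ∧
        (∀ R₁ ∈ C, ∀ R₂ ∈ C, compGraph R₁ R₂ ∈ C) ∧ ∀ R ∈ C, invGraph R ∈ C} := by
  classical
  apply Set.Subset.antisymm
  · -- H ⊆ every C
    rintro R ⟨Λ, ⟨s₀, hs₀⟩, u, hu, v, hv, rfl⟩ C ⟨hbij, hgen, hcomp, hinv⟩
    have hTv := tset_mem hlc hgen hcomp hinv Λ hs₀ hv
    have hTu := tset_mem hlc hgen hcomp hinv Λ hs₀ hu
    have hmem := hcomp _ (hinv _ hTv) _ hTu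
    have heq : compGraph (invGraph {p : S × S | ∃ x ∈ FsetLam Λ, p = (x, thetaApp v x)})
        {p : S × S | ∃ x ∈ FsetLam Λ, p = (x, thetaApp u x)}
        = {p : S × S | ∃ x ∈ FsetLam Λ, p = (thetaApp v x, thetaApp u x)} := by
      ext ⟨p1, p2⟩
      simp only [compGraph, invGraph, Set.mem_setOf_eq, Prod.mk.injEq]
      constructor
      · rintro ⟨y, ⟨a, ha, h1, h2⟩, b, hb, h3, h4⟩
        refine ⟨a, ha, h2, ?_⟩
        rw [h4, ← h1.symm.trans h3]
      · rintro ⟨a, ha, h1, h2⟩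
        exact ⟨a, ⟨a, ha, rfl, h1⟩, a, ha, rfl, h2⟩
    rwa [heq] at hmem
  · -- ⋂₀ ⊆ H : show H is one of the C's
    intro R hR
    refine hR _ ⟨?_, ?_, ?_, ?_⟩
    · -- partial bijections
      rintro R' ⟨Λ, ⟨s₀, hs₀⟩, u, hu, v, hv, rfl⟩
      have hx_ne : ∀ w ∈ Λ, ∀ x ∈ FsetLam Λ, thetaApp w x ≠ 0 :=
        fun w hw x hx => (mem_fsetW _ _).mp (mem_fsetLam.mp hx _ hw)
      refine ⟨?_, ?_, ?_⟩
      · rintro ⟨p1, p2⟩ ⟨x, hx, h⟩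
        rw [Prod.mk.injEq] at h
        obtain ⟨h1, h2⟩ := h
        exact ⟨h1 ▸ hx_ne v hv x hx, h2 ▸ hx_ne u hu x hx⟩
      · rintro x y y' ⟨a, ha, h⟩ ⟨a', ha', h'⟩
        rw [Prod.mk.injEq] at h h'
        obtain ⟨h1, h2⟩ := h
        obtain ⟨h3, h4⟩ := h'
        have hva : thetaApp v a = thetaApp v a' := h1.symm.trans h3
        have : a = a' := theta_cancel hlc v hva (hx_ne v hv a ha)
        rw [h2, h4, this]
      · rintro x x' y ⟨a, ha, h⟩ ⟨a', ha', h'⟩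
        rw [Prod.mk.injEq] at h h'
        obtain ⟨h1, h2⟩ := h
        obtain ⟨h3, h4⟩ := h'
        have hua : thetaApp u a = thetaApp u a' := h2.symm.trans h4
        have : a = a' := theta_cancel hlc u hua (hx_ne u hu a ha)
        rw [h1, h3, this]
    · -- generators
      intro s
      refine ⟨{some s, none}, ⟨s, by simp⟩, some s, by simp, none, by simp, ?_⟩
      ext ⟨p1, p2⟩
      simp only [graphTheta, Set.mem_setOf_eq, Prod.mk.injEq, thetaApp]
      constructor
      · rintro ⟨h1, h2⟩
        refine ⟨p1, ?_, rfl, h1⟩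
        rw [mem_fsetLam]
        intro w hw
        simp only [Finset.mem_insert, Finset.mem_singleton] at hw
        rcases hw with rfl | rfl
        · exact h2
        · exact fset_ne_zero h2
      · rintro ⟨x, hx, rfl, rfl⟩
        exact ⟨rfl, mem_fsetLam.mp hx (some s) (by simp)⟩
    · -- composition
      rintro R₁ ⟨Λ₁, ⟨s₁, hs₁⟩, u₁, hu₁, v₁, hv₁, rfl⟩ R₂ ⟨Λ₂, ⟨s₂, hs₂⟩, u₂, hu₂, v₂, hv₂, rfl⟩
      obtain ⟨e₁, e₂, hid, hsplit⟩ := comp_eps hlc hlcm u₁ v₂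
      obtain ⟨s', hs'⟩ := omul_some s₁ e₁
      refine ⟨Λ₁.image (fun w => omul w e₁) ∪ Λ₂.image (fun w => omul w e₂),
        ⟨s', by
          rw [← hs']
          exact Finset.mem_union_left _ (Finset.mem_image_of_mem _ hs₁)⟩,
        omul u₂ e₂, Finset.mem_union_right _ (Finset.mem_image_of_mem _ hu₂),
        omul v₁ e₁, Finset.mem_union_left _ (Finset.mem_image_of_mem _ hv₁), ?_⟩
      ext ⟨p1, p2⟩
      simp only [compGraph, Set.mem_setOf_eq, Prod.mk.injEq]
      constructor
      · rintro ⟨y, ⟨x, hx, rfl, rfl⟩, x', hx', hyy, rfl⟩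
        have hne : thetaApp u₁ x ≠ 0 := (mem_fsetW _ _).mp (mem_fsetLam.mp hx _ hu₁)
        obtain ⟨z, hxz, hx'z⟩ := hsplit x x' hne hyy
        refine ⟨z, ?_, ?_, ?_⟩
        · rw [mem_fsetLam]
          intro w hw
          rcases Finset.mem_union.mp hw with hw | hw
          · obtain ⟨w₀, hw₀, rfl⟩ := Finset.mem_image.mp hw
            rw [mem_fsetW, thetaApp_omul, ← hxz]
            exact (mem_fsetW _ _).mp (mem_fsetLam.mp hx _ hw₀)
          · obtain ⟨w₀, hw₀, rfl⟩ := Finset.mem_image.mp hw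
            rw [mem_fsetW, thetaApp_omul, ← hx'z]
            exact (mem_fsetW _ _).mp (mem_fsetLam.mp hx' _ hw₀)
        · rw [thetaApp_omul, ← hxz]
        · rw [thetaApp_omul, ← hx'z]
      · rintro ⟨z, hz, rfl, rfl⟩
        have hmemL : ∀ w ∈ Λ₁, thetaApp e₁ z ∈ FsetW w := by
          intro w hw
          rw [mem_fsetW, ← thetaApp_omul]
          exact (mem_fsetW _ _).mp (mem_fsetLam.mp hz _
            (Finset.mem_union_left _ (Finset.mem_image_of_mem _ hw)))
        have hmemR : ∀ w ∈ Λ₂, thetaApp e₂ z ∈ FsetW w := by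
          intro w hw
          rw [mem_fsetW, ← thetaApp_omul]
          exact (mem_fsetW _ _).mp (mem_fsetLam.mp hz _
            (Finset.mem_union_right _ (Finset.mem_image_of_mem _ hw)))
        refine ⟨thetaApp u₁ (thetaApp e₁ z),
          ⟨thetaApp e₁ z, mem_fsetLam.mpr hmemL, (thetaApp_omul _ _ _), rfl⟩,
          thetaApp e₂ z, mem_fsetLam.mpr hmemR, hid z, (thetaApp_omul _ _ _)⟩
    · -- inverses
      rintro R' ⟨Λ, hsome, u, hu, v, hv, rfl⟩
      refine ⟨Λ, hsome, v, hv, u, hu, ?_⟩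
      ext ⟨p1, p2⟩
      simp only [invGraph, Set.mem_setOf_eq, Prod.mk.injEq]
      constructor
      · rintro ⟨x, hx, rfl, rfl⟩
        exact ⟨x, hx, rfl, rfl⟩
      · rintro ⟨x, hx, rfl, rfl⟩
        exact ⟨x, hx, rfl, rfl⟩

end ExSt
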